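/- arXiv:2306.09754 — 2 statements merged into one kernel-verified Lean document; each statement's English description precedes it below -/
import Mathlib

section
/- Suppose every collateralized debt position is over-collateralized at time 0: $p_{y_j,0}\, c_{j,0} / D_{j,0} > \gamma$ for all CDPs $j$. Suppose that at time 1 the prices of a subset $M'$ of tokens collapse to zero, so the total system collateral value becomes $C^*_1 = C^+_0$ (the value of collateral in CDPs not using tokens of $M'$), while total debt is unchanged: $D^*_1 = D^-_0 + D^+_0$, where $D^-_0$ (resp. $D^+_0$) is the debt of affected (resp. unaffected) CDPs. If the debt ceiling constraint $D^-_0 < \zeta' (D^-_0 + D^+_0)$ holds with $0 \leq \zeta' < 1$, then $C^*_1 / D^*_1 > \gamma(1 - \zeta')$. -/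
open Finset

/-- Theorem 1 (sudden crash of tokens): if every CDP is over-collateralized at time 0
and the prices of the tokens in `M'` collapse to zero at time 1, then full backing
holds with threshold `γ * (1 - ζ')`. -/
theorem sudden_price_drop {J T : Type*} [Fintype J] [Nonempty J]
    (y : J → T) (M' : Set T) [DecidablePred (· ∈ M')]
    (p : T → ℝ) (c : J → ℝ) (D : J → ℝ) (γ ζ' : ℝ)
    (hp : ∀ t, 0 ≤ p t) (hc : ∀ j, 0 ≤ c j) (hD : ∀ j, 0 < D j)
    (hγ : 0 < γ) (hζ0 : 0 ≤ ζ') (hζ1 : ζ' < 1)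
    (hover : ∀ j, p (y j) * c j / D j > γ)
    (hnonempty : ∃ j, y j ∉ M')
    (hceil : (∑ j ∈ univ.filter (fun j => y j ∈ M'), D j) <
      ζ' * ((∑ j ∈ univ.filter (fun j => y j ∈ M'), D j) +
            (∑ j ∈ univ.filter (fun j => y j ∉ M'), D j))) :
    (∑ j ∈ univ.filter (fun j => y j ∉ M'), p (y j) * c j) /
      ((∑ j ∈ univ.filter (fun j => y j ∈ M'), D j) +
       (∑ j ∈ univ.filter (fun j => y j ∉ M'), D j)) > γ * (1 - ζ') := by
  set Dm := ∑ j ∈ univ.filter (fun j => y j ∈ M'), D j with hDm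
  set Dp := ∑ j ∈ univ.filter (fun j => y j ∉ M'), D j with hDp
  set Cp := ∑ j ∈ univ.filter (fun j => y j ∉ M'), p (y j) * c j with hCp
  obtain ⟨j0, hj0⟩ := hnonempty
  have hDp_pos : 0 < Dp := by
    apply Finset.sum_pos'
    · intro i _; exact (hD i).le
    · exact ⟨j0, by simp [hj0], hD j0⟩
  have hDm_nonneg : 0 ≤ Dm := Finset.sum_nonneg fun i _ => (hD i).le
  have htot : 0 < Dm + Dp := by linarith
  have hCpDp : γ * Dp < Cp := by
    have : ∀ i ∈ univ.filter (fun j => y j ∉ M'), γ * D i < p (y i) * c i := by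
      intro i _
      have := hover i
      have h := hD i
      rw [gt_iff_lt, lt_div_iff₀ h] at this
      linarith [this]
    calc γ * Dp = ∑ i ∈ univ.filter (fun j => y j ∉ M'), γ * D i := by
          rw [hDp, Finset.mul_sum]
      _ < Cp := Finset.sum_lt_sum_of_nonempty ⟨j0, by simp [hj0]⟩ this
  have hDp_big : (1 - ζ') * (Dm + Dp) < Dp := by nlinarith
  rw [gt_iff_lt, lt_div_iff₀ htot]
  nlinarith
end

section
/- Suppose every CDP is over-collateralized at time 0: $p_{y_j,0}\, c_{j,0}/D_{j,0} > \gamma$ for all $j$. Suppose an attacker on a compromised chain creates $h' \geq 0$ unbacked stablecoins against token types in $M'$, so that at time 1 collateral values are unchanged ($C^-_1 = C^-_0$, $C^+_1 = C^+_0$) but affected debt becomes $D^-_1 = D^-_0 + h'$ while $D^+_1 = D^+_0$. If the debt ceiling still holds after the attack, i.e., $D^-_0 + h' < \zeta'(D^+_0 + D^-_0 + h')$ with $0 \leq \zeta' < 1$, then $C^*_1/D^*_1 > \gamma(1-\zeta')$, where $C^*_1 = C^-_1 + C^+_1$ and $D^*_1 = D^-_1 + D^+_1$. -/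
open Finset

/-- Theorem 2 (compromised coin chain): if every CDP is over-collateralized at time 0
and an attacker mints `h'` unbacked stablecoins against token types in `M'` such that
the debt ceiling still holds, then full backing holds with threshold `γ * (1 - ζ')`. -/
theorem corrupted_chain {J T : Type*} [Fintype J] [Nonempty J]
    (y : J → T) (M' : Set T) [DecidablePred (· ∈ M')]
    (p : T → ℝ) (c : J → ℝ) (D : J → ℝ) (γ ζ' h' : ℝ)
    (hp : ∀ t, 0 ≤ p t) (hc : ∀ j, 0 ≤ c j) (hD : ∀ j, 0 < D j)
    (hγ : 0 < γ) (hζ0 : 0 ≤ ζ') (hζ1 : ζ' < 1) (hh' : 0 ≤ h')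
    (hover : ∀ j, p (y j) * c j / D j > γ)
    (hnonempty : ∃ j, y j ∉ M')
    (hceil : (∑ j ∈ univ.filter (fun j => y j ∈ M'), D j) + h' <
      ζ' * ((∑ j ∈ univ.filter (fun j => y j ∉ M'), D j) +
            (∑ j ∈ univ.filter (fun j => y j ∈ M'), D j) + h')) :
    ((∑ j ∈ univ.filter (fun j => y j ∈ M'), p (y j) * c j) +
     (∑ j ∈ univ.filter (fun j => y j ∉ M'), p (y j) * c j)) /
      (((∑ j ∈ univ.filter (fun j => y j ∈ M'), D j) + h') +
       (∑ j ∈ univ.filter (fun j => y j ∉ M'), D j)) > γ * (1 - ζ') := by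
  set A := ∑ j ∈ univ.filter (fun j => y j ∈ M'), D j with hA
  set B := ∑ j ∈ univ.filter (fun j => y j ∉ M'), D j with hB
  set Ca := ∑ j ∈ univ.filter (fun j => y j ∈ M'), p (y j) * c j with hCa
  set Cb := ∑ j ∈ univ.filter (fun j => y j ∉ M'), p (y j) * c j with hCb
  have hpc : ∀ j, γ * D j < p (y j) * c j := fun j =>
    (lt_div_iff₀ (hD j)).mp (hover j)
  have hA0 : 0 ≤ A := Finset.sum_nonneg fun j _ => (hD j).le
  have hne : (univ.filter (fun j => y j ∉ M')).Nonempty := by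
    obtain ⟨j, hj⟩ := hnonempty
    exact ⟨j, by simp [hj]⟩
  have hB0 : 0 < B := Finset.sum_pos (fun j _ => hD j) hne
  have hCb' : γ * B < Cb := by
    rw [hB, Finset.mul_sum]
    exact Finset.sum_lt_sum_of_nonempty hne fun j _ => hpc j
  have hCa' : γ * A ≤ Ca := by
    rw [hA, Finset.mul_sum]
    exact Finset.sum_le_sum fun j _ => (hpc j).le
  have hDtot : 0 < (A + h') + B := by positivity
  rw [gt_iff_lt, lt_div_iff₀ hDtot]
  have key : γ * (1 - ζ') * ((A + h') + B) < γ * (A + B) := by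
    have h1 : h' < ζ' * ((A + h') + B) := by nlinarith
    nlinarith
  nlinarith
end
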